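/- Let m ≥ 1 and let a, b be integers with 0 ≤ a ≤ b ≤ m−1. Then the (a,b) entry of the adjugate matrix of K_m(s) = I − s·A_m over ℚ[s] equals s^{b−a}·p_a(s²)·p_{m−1−b}(s²); equivalently, p_m(s²)·(K_m(s)^{−1})_{a,b} = s^{b−a}·p_a(s²)·p_{m−1−b}(s²) as an identity of rational functions in s. -/

import Mathlib

/-- The Chebyshev-type polynomial sequence: `p 0 = p 1 = 1`,
`p (r+2) = p (r+1) - X * p r`. -/
noncomputable def chebP : ℕ → Polynomial ℚ
  | 0 => 1
  | 1 => 1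
  | (r+2) => chebP (r+1) - Polynomial.X * chebP r

/-- The adjacency matrix of the path graph on `m` vertices `0,…,m-1`
(entries in `ℚ[s]`): `(A_m)_{i,j} = 1` if `|i - j| = 1` and `0` otherwise. -/
noncomputable def pathAdj (m : ℕ) : Matrix (Fin m) (Fin m) (Polynomial ℚ) :=
  fun i j => if (i : ℕ) + 1 = (j : ℕ) ∨ (j : ℕ) + 1 = (i : ℕ) then 1 else 0

/-- `K_m(s) = I - s·A_m` over `ℚ[s]`, taking `s` to be the variable `X`. -/
noncomputable def pathK (m : ℕ) : Matrix (Fin m) (Fin m) (Polynomial ℚ) :=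
  1 - (Polynomial.X : Polynomial ℚ) • pathAdj m

open Polynomial

/-- `q r = p_r(X²)`. -/
noncomputable def q (r : ℕ) : Polynomial ℚ := (chebP r).comp (X ^ 2)

lemma q_zero : q 0 = 1 := by simp [q, chebP]
lemma q_one : q 1 = 1 := by simp [q, chebP]
lemma q_rec (r : ℕ) : q (r+2) = q (r+1) - X^2 * q r := by
  simp [q, chebP, sub_comp, mul_comp]

lemma keyQ : ∀ n d : ℕ, q (n+1) * q (d+1) - X^2 * q n * q d = q (n + d + 2) := by
  intro n
  induction n with
  | zero =>
    intro d
    rw [q_one, q_zero, show (0:ℕ) + d + 2 = d + 2 from by omega, q_rec]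
    ring
  | succ n ih =>
    intro d
    have h1 := ih (d+1)
    rw [show n + (d+1) + 2 = n+1+d+2 from by omega] at h1
    rw [q_rec n]
    linear_combination h1 - q (n+1) * q_rec d

lemma chebP_eval_zero : ∀ m : ℕ, (chebP m).eval 0 = 1
  | 0 => by simp [chebP]
  | 1 => by simp [chebP]
  | (m+2) => by
    simp [chebP, chebP_eval_zero (m+1)]

lemma q_ne_zero (m : ℕ) : q m ≠ 0 := by
  intro h
  have h1 : (q m).eval 0 = 1 := by simp [q, eval_comp, chebP_eval_zero]
  rw [h] at h1
  simp at h1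

/-- The candidate adjugate, with natural-number indices. -/
noncomputable def Bn (m i j : ℕ) : Polynomial ℚ :=
  X ^ (max i j - min i j) * q (min i j) * q (m - 1 - max i j)

lemma Bn_le {m i j : ℕ} (h : i ≤ j) : Bn m i j = X ^ (j - i) * q i * q (m - 1 - j) := by
  rw [Bn, max_eq_right h, min_eq_left h]

lemma Bn_ge {m i j : ℕ} (h : j ≤ i) : Bn m i j = X ^ (i - j) * q j * q (m - 1 - i) := by
  rw [Bn, max_eq_left h, min_eq_right h]

lemma keyNat (m iv jv : ℕ) (hi : iv < m) (hj : jv < m) :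
    Bn m iv jv
      - X * ((if iv + 1 < m then Bn m (iv+1) jv else 0)
           + (if 1 ≤ iv then Bn m (iv-1) jv else 0))
    = if iv = jv then q m else 0 := by
  rcases lt_trichotomy iv jv with h | rfl | h
  · -- iv < jv
    rw [if_neg (show ¬ (iv = jv) from by omega),
        if_pos (show iv + 1 < m from by omega)]
    obtain ⟨d, rfl⟩ : ∃ d, jv = iv + d + 1 := ⟨jv - iv - 1, by omega⟩
    rcases Nat.eq_zero_or_pos iv with rfl | hpos
    · rw [if_neg (show ¬ (1 ≤ 0) from by omega),
          Bn_le (show (0:ℕ) ≤ 0 + d + 1 from by omega),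
          Bn_le (show (0:ℕ) + 1 ≤ 0 + d + 1 from by omega)]
      rw [show 0 + d + 1 - 0 = d + 1 from by omega,
          show 0 + d + 1 - (0+1) = d from by omega, q_zero, q_one]
      ring
    · obtain ⟨k, rfl⟩ : ∃ k, iv = k + 1 := ⟨iv - 1, by omega⟩
      rw [if_pos (show 1 ≤ k + 1 from by omega),
          Bn_le (show k + 1 ≤ k + 1 + d + 1 from by omega),
          Bn_le (show k + 1 + 1 ≤ k + 1 + d + 1 from by omega),
          Bn_le (show k + 1 - 1 ≤ k + 1 + d + 1 from by omega)]
      simp only [Nat.add_sub_cancel]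
      rw [show k + 1 + d + 1 - (k+1) = d + 1 from by omega,
          show k + 1 + d + 1 - (k+1+1) = d from by omega,
          show k + 1 + d + 1 - k = d + 2 from by omega]
      linear_combination (-(X^(d+1)) * q (m - 1 - (k+1+d+1))) * q_rec k
  · -- iv = jv
    rw [if_pos rfl]
    by_cases hR : iv + 1 < m
    · rw [if_pos hR]
      rcases Nat.eq_zero_or_pos iv with rfl | hpos
      · rw [if_neg (show ¬ (1 ≤ 0) from by omega)]
        obtain ⟨d, rfl⟩ : ∃ d, m = d + 2 := ⟨m - 2, by omega⟩
        rw [Bn_le (le_refl 0), Bn_ge (show (0:ℕ) ≤ 0 + 1 from by omega)]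
        rw [show d + 2 - 1 - 0 = d + 1 from by omega,
            show (0:ℕ) - 0 = 0 from rfl,
            show 0 + 1 - 0 = 1 from rfl,
            show d + 2 - 1 - (0+1) = d from by omega, q_zero, q_rec]
        ring
      · obtain ⟨k, rfl⟩ : ∃ k, iv = k + 1 := ⟨iv - 1, by omega⟩
        rw [if_pos (show 1 ≤ k + 1 from by omega)]
        obtain ⟨e, rfl⟩ : ∃ e, m = k + e + 3 := ⟨m - k - 3, by omega⟩
        rw [Bn_le (le_refl (k+1)), Bn_ge (show (k+1:ℕ) ≤ k+1+1 from by omega),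
            Bn_le (show k + 1 - 1 ≤ k + 1 from by omega)]
        simp only [Nat.add_sub_cancel]
        rw [show k + 1 - (k+1) = 0 from by omega,
            show k + e + 3 - 1 - (k+1) = e + 1 from by omega,
            show k + 1 + 1 - (k+1) = 1 from by omega,
            show k + e + 3 - 1 - (k+1+1) = e from by omega,
            show k + 1 - k = 1 from by omega]
        have h1 := keyQ (k+1) e
        rw [show k + 1 + e + 2 = k + e + 3 from by omega] at h1
        linear_combination h1 - q (e+1) * q_rec k
    · -- iv = m - 1
      rw [if_neg hR]
      rcases Nat.eq_zero_or_pos iv with rfl | hpos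
      · rw [if_neg (show ¬ (1 ≤ 0) from by omega)]
        have : m = 1 := by omega
        subst this
        rw [Bn_le (le_refl 0)]
        norm_num [q_zero, q_one]
      · obtain ⟨k, rfl⟩ : ∃ k, iv = k + 1 := ⟨iv - 1, by omega⟩
        rw [if_pos (show 1 ≤ k + 1 from by omega)]
        have : m = k + 2 := by omega
        subst this
        rw [Bn_le (le_refl (k+1)), Bn_le (show k + 1 - 1 ≤ k + 1 from by omega)]
        simp only [Nat.add_sub_cancel]
        rw [show k + 1 - (k+1) = 0 from by omega,
            show k + 2 - 1 - (k+1) = 0 from by omega,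
            show k + 1 - k = 1 from by omega, q_zero, q_rec]
        ring
  · -- iv > jv
    rw [if_neg (show ¬ (iv = jv) from by omega),
        if_pos (show 1 ≤ iv from by omega)]
    obtain ⟨d, rfl⟩ : ∃ d, iv = jv + d + 1 := ⟨iv - jv - 1, by omega⟩
    by_cases hR : jv + d + 1 + 1 < m
    · rw [if_pos hR]
      obtain ⟨e, rfl⟩ : ∃ e, m = jv + d + e + 3 := ⟨m - jv - d - 3, by omega⟩
      rw [Bn_ge (show jv ≤ jv + d + 1 from by omega),
          Bn_ge (show jv ≤ jv + d + 1 + 1 from by omega),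
          Bn_ge (show jv ≤ jv + d + 1 - 1 from by omega)]
      simp only [Nat.add_sub_cancel]
      rw [show jv + d + 1 - jv = d + 1 from by omega,
          show jv + d + e + 3 - 1 - (jv + d + 1) = e + 1 from by omega,
          show jv + d + 1 + 1 - jv = d + 2 from by omega,
          show jv + d + e + 3 - 1 - (jv + d + 1 + 1) = e from by omega,
          show jv + d - jv = d from by omega,
          show jv + d + e + 3 - 1 - (jv + d) = e + 2 from by omega]
      linear_combination (-(X^(d+1)) * q jv) * q_rec e
    · rw [if_neg hR]
      have : m = jv + d + 2 := by omega
      subst this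
      rw [Bn_ge (show jv ≤ jv + d + 1 from by omega),
          Bn_ge (show jv ≤ jv + d + 1 - 1 from by omega)]
      simp only [Nat.add_sub_cancel]
      rw [show jv + d + 1 - jv = d + 1 from by omega,
          show jv + d + 2 - 1 - (jv + d + 1) = 0 from by omega,
          show jv + d - jv = d from by omega,
          show jv + d + 2 - 1 - (jv + d) = 1 from by omega, q_zero, q_one]
      ring

/-- The candidate adjugate as a matrix. -/
noncomputable def Bm (m : ℕ) : Matrix (Fin m) (Fin m) (Polynomial ℚ) :=
  fun i j => Bn m i j

lemma sum_ite_nat (m : ℕ) (f : ℕ → Polynomial ℚ) (t : ℕ) :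
    ∑ k : Fin m, (if (k : ℕ) = t then f (k : ℕ) else 0) = if t < m then f t else 0 := by
  by_cases h : t < m
  · rw [if_pos h, Finset.sum_eq_single (⟨t, h⟩ : Fin m)]
    · simp
    · intro b _ hb
      rw [if_neg]
      simpa [Fin.ext_iff] using hb
    · simp
  · rw [if_neg h]
    apply Finset.sum_eq_zero
    intro k _
    rw [if_neg]
    have := k.isLt
    omega

lemma sum_ite_pred (m : ℕ) (f : ℕ → Polynomial ℚ) (t : ℕ) :
    ∑ k : Fin m, (if (k : ℕ) + 1 = t then f (k : ℕ) else 0)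
      = if 1 ≤ t ∧ t ≤ m then f (t-1) else 0 := by
  by_cases ht : 1 ≤ t
  · obtain ⟨s, rfl⟩ : ∃ s, t = s + 1 := ⟨t - 1, by omega⟩
    simp only [Nat.add_right_cancel_iff]
    rw [sum_ite_nat m f s]
    have h2 : (1 ≤ s + 1 ∧ s + 1 ≤ m) ↔ s < m := by omega
    simp only [h2, Nat.add_sub_cancel]
  · rw [if_neg (by omega)]
    apply Finset.sum_eq_zero
    intro k _
    rw [if_neg (by omega)]

lemma mulB (m : ℕ) :
    pathK m * Bm m = q m • (1 : Matrix (Fin m) (Fin m) (Polynomial ℚ)) := by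
  ext i j
  rw [Matrix.mul_apply]
  simp only [pathK, pathAdj, Bm, Matrix.sub_apply, Matrix.one_apply, Matrix.smul_apply,
    smul_eq_mul]
  have step : ∀ k : Fin m,
      ((if i = k then (1 : Polynomial ℚ) else 0)
        - X * (if (i:ℕ) + 1 = (k:ℕ) ∨ (k:ℕ) + 1 = (i:ℕ) then 1 else 0)) * Bn m k j
      = (if i = k then Bn m k j else 0)
        - X * ((if (k:ℕ) = (i:ℕ) + 1 then Bn m (k:ℕ) (j:ℕ) else 0)
             + (if (k:ℕ) + 1 = (i:ℕ) then Bn m (k:ℕ) (j:ℕ) else 0)) := by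
    intro k
    by_cases h1 : (i:ℕ) + 1 = (k:ℕ)
    · have hik : ¬ i = k := by intro hh; subst hh; omega
      simp only [if_pos (Or.inl h1), if_pos (show (k:ℕ) = (i:ℕ)+1 from by omega),
        if_neg (show ¬ ((k:ℕ) + 1 = (i:ℕ)) from by omega), if_neg hik]
      ring
    · by_cases h2 : (k:ℕ) + 1 = (i:ℕ)
      · have hik : ¬ i = k := by intro hh; subst hh; omega
        simp only [if_pos (Or.inr h2), if_pos h2,
          if_neg (show ¬ ((k:ℕ) = (i:ℕ)+1) from by omega), if_neg hik]
        ring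
      · have hor : ¬ ((i:ℕ) + 1 = (k:ℕ) ∨ (k:ℕ) + 1 = (i:ℕ)) := by tauto
        simp only [if_neg hor, if_neg h2,
          if_neg (show ¬ ((k:ℕ) = (i:ℕ)+1) from by omega)]
        by_cases hik : i = k <;> simp [hik]
  rw [Finset.sum_congr rfl (fun k _ => step k)]
  rw [Finset.sum_sub_distrib, ← Finset.mul_sum, Finset.sum_add_distrib]
  rw [sum_ite_nat m (fun t => Bn m t j) ((i:ℕ)+1),
      sum_ite_pred m (fun t => Bn m t j) (i:ℕ)]
  have hsum1 : ∑ k : Fin m, (if i = k then Bn m k j else 0) = Bn m i j := by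
    rw [Finset.sum_ite_eq]
    simp
  rw [hsum1]
  have h2 : (1 ≤ (i:ℕ) ∧ (i:ℕ) ≤ m) ↔ 1 ≤ (i:ℕ) := by
    have := i.isLt; omega
  simp only [h2]
  rw [keyNat m i j i.isLt j.isLt]
  by_cases h : i = j
  · rw [if_pos h, if_pos (show (i:ℕ) = (j:ℕ) from by rw [h]), mul_one]
  · rw [if_neg h, if_neg (show ¬ ((i:ℕ) = (j:ℕ)) from by rw [Fin.ext_iff] at h; omega),
        mul_zero]

lemma pathK_entry {m : ℕ} (i j : Fin m) :
    pathK m i j = (if (i:ℕ) = (j:ℕ) then 1 else 0)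
      - X * (if (i:ℕ) + 1 = (j:ℕ) ∨ (j:ℕ) + 1 = (i:ℕ) then 1 else 0) := by
  simp [pathK, pathAdj, Matrix.one_apply, Fin.ext_iff]

lemma sub1 (m : ℕ) : (pathK (m+1)).submatrix Fin.succ Fin.succ = pathK m := by
  ext i j
  rw [Matrix.submatrix_apply, pathK_entry, pathK_entry]
  simp only [Fin.val_succ]
  rw [if_congr (show ((i:ℕ)+1 = (j:ℕ)+1) ↔ ((i:ℕ) = (j:ℕ)) from by omega) rfl rfl,
      if_congr (show ((i:ℕ)+1+1 = (j:ℕ)+1 ∨ (j:ℕ)+1+1 = (i:ℕ)+1)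
        ↔ ((i:ℕ)+1 = (j:ℕ) ∨ (j:ℕ)+1 = (i:ℕ)) from by omega) rfl rfl]

lemma det_pathK : ∀ m : ℕ, (pathK m).det = q m := by
  intro m
  induction m using Nat.strong_induction_on with
  | _ m ih =>
    match m with
    | 0 => rw [Matrix.det_fin_zero, q_zero]
    | 1 =>
      rw [Matrix.det_fin_one, pathK_entry, q_one]
      norm_num
    | (k+2) =>
      rw [Matrix.det_succ_row_zero, Fin.sum_univ_succ, Fin.sum_univ_succ]
      have hA00 : pathK (k+2) 0 0 = 1 := by rw [pathK_entry]; norm_num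
      have hA01 : pathK (k+2) 0 ((0 : Fin (k+1)).succ) = -X := by
        rw [pathK_entry]
        simp
      have hrest : ∀ j : Fin k,
          pathK (k+2) 0 ((j.succ).succ) = 0 := by
        intro j
        rw [pathK_entry]
        rw [if_neg (by simp only [Fin.val_succ, Fin.val_zero]; omega),
          if_neg (by simp only [Fin.val_succ, Fin.val_zero]; omega)]
        ring
      have hsum0 : ∑ j : Fin k, (-1:Polynomial ℚ) ^ ((j.succ.succ : Fin (k+2)) : ℕ)
          * pathK (k+2) 0 (j.succ.succ)
          * ((pathK (k+2)).submatrix Fin.succ (j.succ.succ).succAbove).det = 0 := by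
        apply Finset.sum_eq_zero
        intro j _
        rw [hrest j]
        ring
      rw [hsum0, hA00, hA01]
      have hm1 : ((pathK (k+2)).submatrix Fin.succ ((0 : Fin (k+2)).succAbove)).det
          = q (k+1) := by
        rw [Fin.succAbove_zero, sub1, ih (k+1) (by omega)]
      have hm2 : ((pathK (k+2)).submatrix Fin.succ (((0 : Fin (k+1)).succ).succAbove)).det
          = -X * q k := by
        set N := (pathK (k+2)).submatrix Fin.succ (((0 : Fin (k+1)).succ).succAbove) with hN
        rw [Matrix.det_succ_column_zero, Fin.sum_univ_succ]
        have hN00 : N 0 0 = -X := by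
          rw [hN, Matrix.submatrix_apply, Fin.succ_succAbove_zero, pathK_entry]
          simp
        have hNrest : ∀ i : Fin k, N i.succ 0 = 0 := by
          intro i
          rw [hN, Matrix.submatrix_apply, Fin.succ_succAbove_zero, pathK_entry]
          rw [if_neg (by simp only [Fin.val_succ, Fin.val_zero]; omega),
            if_neg (by simp only [Fin.val_succ, Fin.val_zero]; omega)]
          ring
        have hz : ∑ i : Fin k, (-1:Polynomial ℚ) ^ ((i.succ : Fin (k+1)) : ℕ)
            * N i.succ 0 * ((N.submatrix (i.succ).succAbove Fin.succ).det) = 0 := by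
          apply Finset.sum_eq_zero
          intro i _
          rw [hNrest i]
          ring
        rw [hz, hN00]
        have hsub : N.submatrix ((0 : Fin (k+1)).succAbove) Fin.succ = pathK k := by
          rw [hN]
          ext i j
          simp only [Matrix.submatrix_apply, Fin.succAbove_zero, Fin.succ_succAbove_succ]
          rw [pathK_entry, pathK_entry]
          simp only [Fin.val_succ]
          rw [if_congr (show ((i:ℕ)+1+1 = (j:ℕ)+1+1) ↔ ((i:ℕ) = (j:ℕ)) from by omega) rfl rfl,
              if_congr (show ((i:ℕ)+1+1+1 = (j:ℕ)+1+1 ∨ (j:ℕ)+1+1+1 = (i:ℕ)+1+1)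
                ↔ ((i:ℕ)+1 = (j:ℕ) ∨ (j:ℕ)+1 = (i:ℕ)) from by omega) rfl rfl]
        rw [hsub, ih k (by omega)]
        simp
      rw [hm1, hm2]
      simp only [Fin.val_zero, Fin.val_succ, pow_zero, pow_one]
      rw [q_rec k]
      ring

lemma adj_eq (m : ℕ) : (pathK m).adjugate = Bm m := by
  have hmulB : pathK m * Bm m = q m • 1 := mulB m
  have h1 : pathK m * (pathK m).adjugate = q m • 1 := by
    rw [Matrix.mul_adjugate, det_pathK]
  have h3 : (pathK m).adjugate * (pathK m * (pathK m).adjugate)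
      = (pathK m).adjugate * (pathK m * Bm m) := by rw [h1, hmulB]
  rw [← mul_assoc, ← mul_assoc, Matrix.adjugate_mul, det_pathK,
      Matrix.smul_mul, one_mul, Matrix.smul_mul, one_mul] at h3
  funext i j
  have h4 := congrFun (congrFun h3 i) j
  simp only [Matrix.smul_apply, smul_eq_mul] at h4
  exact mul_left_cancel₀ (q_ne_zero m) h4

/-- let `m ≥ 1` and `0 ≤ a ≤ b ≤ m-1`.  Then the `(a,b)` entry
of the adjugate matrix of `K_m(s) = I - s·A_m` over `ℚ[s]` equals
`s^{b-a}·p_a(s²)·p_{m-1-b}(s²)` (equivalently,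
`p_m(s²)·(K_m(s)⁻¹)_{a,b} = s^{b-a}·p_a(s²)·p_{m-1-b}(s²)`). -/
theorem statement12 (m : ℕ) (hm : 1 ≤ m) (a b : Fin m) (hab : (a : ℕ) ≤ (b : ℕ)) :
    (pathK m).adjugate a b
      = Polynomial.X ^ ((b : ℕ) - (a : ℕ)) *
          (chebP (a : ℕ)).comp (Polynomial.X ^ 2) *
          (chebP (m - 1 - (b : ℕ))).comp (Polynomial.X ^ 2) := by
  rw [adj_eq m]
  show Bn m a b = _
  rw [Bn_le hab]
  rfl
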